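/- If C = S/Ann_S(F) with F = T^{n−1}·F_B + G is a free extension of A = k[t]/(t^n) with fiber B = R/Ann_R(F_B) (i.e. ι makes C a free A-module and ker π = t·C), then (Ann_R(F_B))^2 ∘ G = 0. -/

import Mathlib

open MvPolynomial

noncomputable section

variable {k : Type*} [Field k]

open Classical in
/-- Contraction action of `g ∈ k[x_1,…]` on `F ∈ k[X_1,…]`: the monomial `x^a` sends
`X^b` to `X^(b-a)` if `a ≤ b` and to `0` otherwise, extended bilinearly. -/
def contract {σ : Type*} (g F : MvPolynomial σ k) : MvPolynomial σ k :=
  ∑ a ∈ g.support, ∑ b ∈ F.support,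
    if a ≤ b then monomial (b - a) (g.coeff a * F.coeff b) else 0

/-- The annihilator `Ann(F) = {g : g ∘ F = 0}` (a set; it is in fact an ideal). -/
def annSet {σ : Type*} (F : MvPolynomial σ k) : Set (MvPolynomial σ k) :=
  {g | contract g F = 0}

/-- The annihilator ideal of `F` (since `annSet F` is closed under the ideal operations,
the span coincides with it). -/
def annIdeal {σ : Type*} (F : MvPolynomial σ k) : Ideal (MvPolynomial σ k) :=
  Ideal.span (annSet F)

/-- `C` is a free module over `A` via the ring map `ι : A → C`. -/
def freeVia {A C : Type*} [CommRing A] [CommRing C] (ι : A →+* C) : Prop :=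
  @Module.Free A C _ _ (Module.compHom C ι)


open Classical in
lemma contract_eq_sum {σ : Type*} (g F : MvPolynomial σ k) {s t : Finset (σ →₀ ℕ)}
    (hs : g.support ⊆ s) (ht : F.support ⊆ t) :
    contract g F = ∑ a ∈ s, ∑ b ∈ t,
      if a ≤ b then monomial (b - a) (g.coeff a * F.coeff b) else 0 := by
  unfold contract
  rw [Finset.sum_subset hs (fun a _ ha => by
    simp [MvPolynomial.notMem_support_iff.mp ha])]
  refine Finset.sum_congr rfl fun a _ => ?_
  exact Finset.sum_subset ht (fun b _ hb => by
    simp [MvPolynomial.notMem_support_iff.mp hb])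

lemma contract_add_left {σ : Type*} (p q F : MvPolynomial σ k) :
    contract (p + q) F = contract p F + contract q F := by
  classical
  rw [contract_eq_sum (p+q) F (s := p.support ∪ q.support) (t := F.support)
       (Finsupp.support_add) le_rfl,
     contract_eq_sum p F (s := p.support ∪ q.support) (Finset.subset_union_left) le_rfl,
     contract_eq_sum q F (s := p.support ∪ q.support) (Finset.subset_union_right) le_rfl,
     ← Finset.sum_add_distrib]
  refine Finset.sum_congr rfl fun a _ => ?_
  rw [← Finset.sum_add_distrib]
  refine Finset.sum_congr rfl fun b _ => ?_
  split_ifs with h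
  · rw [coeff_add, add_mul, map_add]
  · rw [add_zero]

lemma contract_add_right {σ : Type*} (p F G : MvPolynomial σ k) :
    contract p (F + G) = contract p F + contract p G := by
  classical
  rw [contract_eq_sum p (F+G) (s := p.support) (t := F.support ∪ G.support)
       le_rfl (Finsupp.support_add),
     contract_eq_sum p F (t := F.support ∪ G.support) le_rfl (Finset.subset_union_left),
     contract_eq_sum p G (t := F.support ∪ G.support) le_rfl (Finset.subset_union_right),
     ← Finset.sum_add_distrib]
  refine Finset.sum_congr rfl fun a _ => ?_
  rw [← Finset.sum_add_distrib]
  refine Finset.sum_congr rfl fun b _ => ?_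
  split_ifs with h
  · rw [coeff_add, mul_add, map_add]
  · rw [add_zero]

@[simp] lemma contract_zero_left {σ : Type*} (F : MvPolynomial σ k) :
    contract (0 : MvPolynomial σ k) F = 0 := by
  simp [contract]

@[simp] lemma contract_zero_right {σ : Type*} (p : MvPolynomial σ k) :
    contract p (0 : MvPolynomial σ k) = 0 := by
  simp [contract]

lemma contract_sub_left {σ : Type*} (p q F : MvPolynomial σ k) :
    contract (p - q) F = contract p F - contract q F := by
  have h := contract_add_left (p - q) q F
  rw [sub_add_cancel] at h
  rw [h]; ring

open Classical in
lemma contract_monomial_monomial {σ : Type*} (u v : σ →₀ ℕ) (a b : k) :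
    contract (monomial u a) (monomial v b)
      = if u ≤ v then monomial (v - u) (a * b) else 0 := by
  by_cases ha : a = 0
  · simp [ha]
  by_cases hb : b = 0
  · simp [hb]
  unfold contract
  rw [support_monomial, support_monomial, if_neg ha, if_neg hb]
  simp [coeff_monomial]

lemma contract_mul {σ : Type*} (p q F : MvPolynomial σ k) :
    contract (p * q) F = contract p (contract q F) := by
  classical
  induction p using MvPolynomial.induction_on' with
  | add p₁ p₂ ih₁ ih₂ =>
    rw [add_mul, contract_add_left, contract_add_left, ih₁, ih₂]
  | monomial u a =>
    induction q using MvPolynomial.induction_on' with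
    | add q₁ q₂ ih₁ ih₂ =>
      rw [mul_add, contract_add_left, contract_add_left, contract_add_right, ih₁, ih₂]
    | monomial v b =>
      induction F using MvPolynomial.induction_on' with
      | add F₁ F₂ ih₁ ih₂ =>
        rw [contract_add_right, contract_add_right, ih₁, ih₂, contract_add_right]
      | monomial w d =>
        rw [monomial_mul, contract_monomial_monomial, contract_monomial_monomial]
        by_cases hvw : v ≤ w
        · rw [if_pos hvw, contract_monomial_monomial]
          by_cases huv : u + v ≤ w
          · have h1 : u ≤ w - v := le_tsub_of_add_le_right huv
            rw [if_pos huv, if_pos h1, add_comm u v, tsub_add_eq_tsub_tsub, mul_assoc]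
          · have h1 : ¬ u ≤ w - v := fun h => huv (add_le_of_le_tsub_right_of_le hvw h)
            rw [if_neg huv, if_neg h1]
        · rw [if_neg hvw, contract_zero_right, if_neg (fun h => hvw (le_trans le_add_self h))]

lemma contract_of_mem_annIdeal {σ : Type*} {F p : MvPolynomial σ k}
    (hp : p ∈ annIdeal F) : contract p F = 0 := by
  induction hp using Submodule.span_induction with
  | mem x hx => exact hx
  | zero => simp [contract]
  | add x y _ _ hx hy => rw [contract_add_left, hx, hy, add_zero]
  | smul r x _ hx => rw [smul_eq_mul, contract_mul, hx, contract_zero_right]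

-- rename lemmas
variable {ρ : Type*}

lemma mapDomain_some_none (u : ρ →₀ ℕ) :
    Finsupp.mapDomain (Option.some) u (none : Option ρ) = 0 :=
  Finsupp.mapDomain_notin_range _ _ (by simp)

lemma mapDomain_some_some (u : ρ →₀ ℕ) (i : ρ) :
    Finsupp.mapDomain (Option.some) u (some i) = u i :=
  Finsupp.mapDomain_apply (Option.some_injective _) _ _

lemma contract_rename_pow_mul (m : ℕ) (p q : MvPolynomial ρ k) :
    contract (rename Option.some p)
        ((X none : MvPolynomial (Option ρ) k) ^ m * rename Option.some q)
      = X none ^ m * rename Option.some (contract p q) := by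
  classical
  induction p using MvPolynomial.induction_on' with
  | add p₁ p₂ ih₁ ih₂ =>
    rw [map_add, contract_add_left, contract_add_left, ih₁, ih₂, map_add, mul_add]
  | monomial u a =>
    induction q using MvPolynomial.induction_on' with
    | add q₁ q₂ ih₁ ih₂ =>
      rw [map_add, mul_add, contract_add_right, ih₁, ih₂, contract_add_right, map_add, mul_add]
    | monomial v b =>
      rw [rename_monomial, rename_monomial, X_pow_eq_monomial, monomial_mul, one_mul,
        contract_monomial_monomial, contract_monomial_monomial]
      by_cases h : u ≤ v
      · have hle : Finsupp.mapDomain Option.some u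
            ≤ Finsupp.single (none : Option ρ) m + Finsupp.mapDomain Option.some v := by
          rw [Finsupp.le_def]
          intro x
          match x with
          | none => simp [mapDomain_some_none]
          | some i =>
            simp only [mapDomain_some_some, Finsupp.add_apply, Finsupp.single_apply]
            exact le_add_of_nonneg_of_le (by positivity) (Finsupp.le_def.mp h i)
        have hsub : Finsupp.single (none : Option ρ) m + Finsupp.mapDomain Option.some v
            - Finsupp.mapDomain Option.some u
            = Finsupp.single (none : Option ρ) m + Finsupp.mapDomain Option.some (v - u) := by
          ext x
          match x with
          | none =>
            simp [Finsupp.tsub_apply, mapDomain_some_none]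
          | some i =>
            simp [Finsupp.tsub_apply, mapDomain_some_some, Finsupp.single_apply]
        rw [if_pos h, if_pos hle, rename_monomial, monomial_mul, one_mul, hsub]
      · have hle : ¬ Finsupp.mapDomain Option.some u
            ≤ Finsupp.single (none : Option ρ) m + Finsupp.mapDomain Option.some v := by
          intro hc
          rw [Finsupp.le_def] at hc
          refine h (Finsupp.le_def.mpr fun i => ?_)
          have := hc (some i)
          simpa [mapDomain_some_some, Finsupp.single_apply] using this
        rw [if_neg h, if_neg hle, map_zero, mul_zero]

lemma contract_X_none_rename (q : MvPolynomial ρ k) :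
    contract (X (none : Option ρ)) (rename Option.some q) = 0 := by
  classical
  induction q using MvPolynomial.induction_on' with
  | add q₁ q₂ ih₁ ih₂ => rw [map_add, contract_add_right, ih₁, ih₂, add_zero]
  | monomial v b =>
    rw [rename_monomial, X, contract_monomial_monomial, if_neg]
    intro hc
    rw [Finsupp.le_def] at hc
    have := hc none
    simp [mapDomain_some_none, Finsupp.single_apply] at this

/-- Corollary 3.7 (necessity, = [IMM, Theorem 2.25]).  Let `F_B ∈ Q` be nonzero
homogeneous of degree `j_B`, `B = R/Ann(F_B)`, `G ∈ Q` homogeneous of degree `j_B + n - 1`,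
and `F = T^{n-1}·F_B + G ∈ Q_S`.  If `C = S/Ann(F)` is a free extension of
`A = k[t]/(t^n)` with fiber `B` (`ι` makes `C` a free `A`-module and `ker π = t·C`),
then `(Ann(F_B))^2 ∘ G = 0`. -/
theorem corollary_necessity (r n : ℕ) (hn : 1 ≤ n) (jB : ℕ)
    (FB : MvPolynomial (Fin r) k) (hFB : FB ≠ 0) (hFBhom : FB.IsHomogeneous jB)
    (G : MvPolynomial (Fin r) k) (hGhom : G.IsHomogeneous (jB + n - 1))
    (F : MvPolynomial (Option (Fin r)) k)
    (hF : F = X none ^ (n - 1) * rename Option.some FB + rename Option.some G)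
    -- the algebra maps ι : A → C (induced by t ↦ t) and π : C → B (induced by x_i ↦ x_i, t ↦ 0)
    (ι : (Polynomial k ⧸ Ideal.span {(Polynomial.X : Polynomial k) ^ n}) →ₐ[k]
      (MvPolynomial (Option (Fin r)) k ⧸ annIdeal F))
    (hι : ι (Ideal.Quotient.mk _ Polynomial.X) = Ideal.Quotient.mk _ (X none))
    (π : (MvPolynomial (Option (Fin r)) k ⧸ annIdeal F) →ₐ[k]
      (MvPolynomial (Fin r) k ⧸ annIdeal FB))
    (hπ : ∀ s : MvPolynomial (Option (Fin r)) k,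
      π (Ideal.Quotient.mk _ s)
        = Ideal.Quotient.mk _ (aeval (fun o => o.elim 0 fun i => X i) s))
    -- C is a free extension of A with fiber B:
    (hfree : freeVia ι.toRingHom)
    (hsurj : Function.Surjective π)
    (hker : RingHom.ker π = Ideal.span {Ideal.Quotient.mk (annIdeal F) (X none)}) :
    ∀ g ∈ (annIdeal FB) ^ 2, contract g G = 0 := by
  intro g0 hg0
  rw [pow_two] at hg0
  refine Submodule.mul_induction_on hg0 (fun p hp q hq => ?_)
    (fun x y hx hy => by rw [contract_add_left, hx, hy, add_zero])
  · 
    -- p, q ∈ annIdeal FB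
    have hpFB : contract p FB = 0 := contract_of_mem_annIdeal hp
    have hqFB : contract q FB = 0 := contract_of_mem_annIdeal hq
    -- Step A/B: the class of rename p lies in ker π
    have hkerp : Ideal.Quotient.mk (annIdeal F) (rename Option.some p) ∈ RingHom.ker π := by
      rw [RingHom.mem_ker]
      show π (Ideal.Quotient.mk _ (rename Option.some p)) = 0
      rw [hπ, aeval_rename]
      have : ((fun o : Option (Fin r) => o.elim 0 fun i => X i) ∘ Option.some)
          = (X : Fin r → MvPolynomial (Fin r) k) := rfl
      rw [this]
      have : aeval (X : Fin r → MvPolynomial (Fin r) k) p = p := by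
        simp [aeval_X_left]
      rw [this, Ideal.Quotient.eq_zero_iff_mem]
      exact hp
    rw [hker, Ideal.mem_span_singleton'] at hkerp
    obtain ⟨z, hz⟩ := hkerp
    obtain ⟨a, rfl⟩ := Ideal.Quotient.mk_surjective z
    -- rename p - a * X none ∈ annIdeal F
    have hmem : rename Option.some p - a * X none ∈ annIdeal F := by
      rw [← Ideal.Quotient.eq_zero_iff_mem, map_sub, map_mul, hz, sub_self]
    have hcp : contract (rename Option.some p) F = contract (a * X none) F := by
      have h0 := contract_of_mem_annIdeal hmem
      rw [contract_sub_left, sub_eq_zero] at h0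
      exact h0
    -- contract (rename q) F = rename (contract q G)
    have hcq : contract (rename Option.some q) F
        = rename Option.some (contract q G) := by
      rw [hF, contract_add_right, contract_rename_pow_mul, hqFB, map_zero, mul_zero, zero_add]
      have := contract_rename_pow_mul (k := k) 0 q G
      simpa using this
    -- main computation
    have hmain : contract (rename Option.some (p * q)) F = 0 := by
      rw [map_mul, mul_comm, contract_mul, hcp, ← contract_mul]
      have : rename Option.some q * (a * X none)
          = a * (X none * rename Option.some q) := by ring
      rw [this, contract_mul, contract_mul, hcq, contract_X_none_rename,
        contract_zero_right]
    -- expand and conclude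
    rw [hF, contract_add_right, contract_rename_pow_mul] at hmain
    have hpq : contract (p * q) FB = 0 := by
      rw [contract_mul, hqFB, contract_zero_right]
    rw [hpq, map_zero, mul_zero, zero_add] at hmain
    have h0 := contract_rename_pow_mul (k := k) 0 (p * q) G
    simp only [pow_zero, one_mul] at h0
    rw [h0] at hmain
    exact (rename_injective _ (Option.some_injective _)) (by rw [hmain, map_zero])

end
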